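/- There exists an absolute constant C > 0 such that the following holds. Let n, r, m be positive integers and δ, η > 0. For each i ∈ [n] let P_i : 𝔽₂^m → 𝔽₂, let Q_{i1},…,Q_{ir} : 𝔽₂^m → 𝔽₂ be functions, and let Γ_i : 𝔽₂^r → 𝔽₂, such that P_i(x) = Γ_i(Q_{i1}(x),…,Q_{ir}(x)) for all x and |Pr_{X ~ Unif(𝔽₂^m)}[P_i(X) = 1] − 1/3| ≥ δ. Suppose that for all i ≠ j the distribution on 𝔽₂^{2r} of the tuple (Q_{i1}(X),…,Q_{ir}(X), Q_{j1}(X),…,Q_{jr}(X)), for X uniform on 𝔽₂^m, is within total variation distance η of the uniform distribution on 𝔽₂^{2r}. Then ‖(P₁,…,Pₙ) − Ber(1/3)^⊗n‖_TV ≥ 1 − C·η/δ² − C/(δ²·n). -/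

import Mathlib

open Finset

/-- Distribution of `f(X)` on `β` for `X` uniform on the finite type `α`. -/
noncomputable def distOf {α β : Type*} [Fintype α] [DecidableEq β] (f : α → β) (y : β) : ℝ :=
  ((Finset.univ.filter fun x => f x = y).card : ℝ) / (Fintype.card α : ℝ)

/-- Output distribution on `𝔽₂ⁿ` of the tuple `(P₁(X),…,Pₙ(X))` for uniform `X ∈ 𝔽₂^m`. -/
noncomputable def outDist {m n : ℕ} (P : Fin n → (Fin m → ZMod 2) → ZMod 2) :
    (Fin n → ZMod 2) → ℝ :=
  distOf (fun x i => P i x)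

/-- Total variation distance between two distributions on a finite type. -/
noncomputable def tvDist {β : Type*} [Fintype β] (μ ν : β → ℝ) : ℝ :=
  (1 / 2) * ∑ y, |μ y - ν y|

/-- The distribution `Ber(1/3)^{⊗n}` on `𝔽₂ⁿ`. -/
noncomputable def ber13 {n : ℕ} (y : Fin n → ZMod 2) : ℝ :=
  (1 / 3 : ℝ) ^ (Finset.univ.filter fun i => y i = 1).card *
    (2 / 3 : ℝ) ^ (n - (Finset.univ.filter fun i => y i = 1).card)

/-- `P : 𝔽₂^m → 𝔽₂` has degree at most `d`. -/
def DegLE {m : ℕ} (d : ℕ) (P : (Fin m → ZMod 2) → ZMod 2) : Prop :=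
  ∃ p : MvPolynomial (Fin m) (ZMod 2), p.totalDegree ≤ d ∧ ∀ x, MvPolynomial.eval x p = P x

/-- `rank_{d'}(P) ≤ k`. -/
def RankLE {m : ℕ} (d' k : ℕ) (P : (Fin m → ZMod 2) → ZMod 2) : Prop :=
  ∃ (Q : Fin k → (Fin m → ZMod 2) → ZMod 2) (Γ : (Fin k → ZMod 2) → ZMod 2),
    (∀ j, DegLE d' (Q j)) ∧ ∀ x, P x = Γ (fun j => Q j x)

/-- `Pr_{X uniform}[P(X) = 1]`. -/
noncomputable def prOne {m : ℕ} (P : (Fin m → ZMod 2) → ZMod 2) : ℝ :=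
  distOf P 1

/- ### Auxiliary lemmas -/

lemma sum_distOf_mul {α β : Type*} [Fintype α] [Fintype β] [DecidableEq β]
    (g : α → β) (f : β → ℝ) :
    ∑ y, distOf g y * f y = (∑ x, f (g x)) / (Fintype.card α : ℝ) := by
  unfold distOf
  simp only [div_mul_eq_mul_div]
  rw [← Finset.sum_div]
  congr 1
  rw [← Finset.sum_fiberwise' univ g f]
  refine Finset.sum_congr rfl fun y _ => ?_
  rw [Finset.sum_const, nsmul_eq_mul]

lemma sum_distOf {α β : Type*} [Fintype α] [Fintype β] [DecidableEq β] [Nonempty α]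
    (g : α → β) : ∑ y, distOf g y = 1 := by
  have := sum_distOf_mul g (fun _ => (1:ℝ))
  simpa [Fintype.card_pos, ne_of_gt, div_self] using this

lemma distOf_nonneg {α β : Type*} [Fintype α] [DecidableEq β] (g : α → β) (y : β) :
    0 ≤ distOf g y := by
  unfold distOf
  positivity

lemma tv_ge {β : Type*} [Fintype β] [DecidableEq β] (μ ν : β → ℝ)
    (hμ : ∑ y, μ y = 1) (hν : ∑ y, ν y = 1) (A : Finset β) :
    (∑ y ∈ A, μ y) - ∑ y ∈ A, ν y ≤ tvDist μ ν := by
  have h1 : ∑ y, |μ y - ν y| = ∑ y ∈ A, |μ y - ν y| + ∑ y ∈ Aᶜ, |μ y - ν y| :=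
    (Finset.sum_add_sum_compl A _).symm
  have h2 : ∑ y ∈ A, (μ y - ν y) ≤ ∑ y ∈ A, |μ y - ν y| :=
    Finset.sum_le_sum fun y _ => le_abs_self _
  have h3 : ∑ y ∈ Aᶜ, (ν y - μ y) ≤ ∑ y ∈ Aᶜ, |μ y - ν y| :=
    Finset.sum_le_sum fun y _ => by rw [abs_sub_comm]; exact le_abs_self _
  have hμ' : ∑ y ∈ Aᶜ, μ y = 1 - ∑ y ∈ A, μ y := by
    rw [← hμ, ← Finset.sum_add_sum_compl A μ]; ring
  have hν' : ∑ y ∈ Aᶜ, ν y = 1 - ∑ y ∈ A, ν y := by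
    rw [← hν, ← Finset.sum_add_sum_compl A ν]; ring
  have : ∑ y ∈ A, (μ y - ν y) + ∑ y ∈ Aᶜ, (ν y - μ y)
      = 2 * ((∑ y ∈ A, μ y) - ∑ y ∈ A, ν y) := by
    rw [Finset.sum_sub_distrib, Finset.sum_sub_distrib, hμ', hν']; ring
  unfold tvDist
  nlinarith [h1, h2, h3, this]

lemma cheb {β : Type*} [Fintype β] (μ : β → ℝ) (hpos : ∀ y, 0 ≤ μ y)
    (Z : β → ℝ) (t : ℝ) (ht : 0 ≤ t) (A : Finset β) (hA : ∀ y ∈ A, t ≤ |Z y|) :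
    t ^ 2 * ∑ y ∈ A, μ y ≤ ∑ y, μ y * Z y ^ 2 := by
  rw [Finset.mul_sum]
  refine le_trans (Finset.sum_le_sum fun y hy => ?_)
    (Finset.sum_le_sum_of_subset_of_nonneg (Finset.subset_univ A)
      fun y _ _ => mul_nonneg (hpos y) (sq_nonneg _))
  have h1 : t ^ 2 ≤ Z y ^ 2 := by
    have := hA y hy
    calc t ^ 2 ≤ |Z y| ^ 2 := pow_le_pow_left₀ ht this 2
    _ = Z y ^ 2 := sq_abs _
  calc t ^ 2 * μ y = μ y * t ^ 2 := mul_comm _ _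
  _ ≤ μ y * Z y ^ 2 := mul_le_mul_of_nonneg_left h1 (hpos y)

lemma zmod_sum (f : ZMod 2 → ℝ) : ∑ v : ZMod 2, f v = f 0 + f 1 := by
  show ∑ v : Fin 2, f v = _
  exact Fin.sum_univ_two f

noncomputable def bweight : ZMod 2 → ℝ := fun v => if v = 1 then 1/3 else 2/3

noncomputable def hfun : ZMod 2 → ℝ := fun v => (if v = 1 then (1:ℝ) else 0) - 1/3

lemma ber13_eq_prod {n : ℕ} (y : Fin n → ZMod 2) : ber13 y = ∏ i, bweight (y i) := by
  unfold ber13 bweight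
  rw [← Finset.prod_filter_mul_prod_filter_not univ (fun i => y i = 1)]
  have h1 : ∏ i ∈ univ.filter (fun i => y i = 1), (if y i = 1 then (1/3:ℝ) else 2/3)
      = (1/3:ℝ) ^ (univ.filter fun i => y i = 1).card := by
    rw [Finset.prod_congr rfl (fun i hi => by
      rw [if_pos (Finset.mem_filter.1 hi).2]), Finset.prod_const]
  have h2 : ∏ i ∈ univ.filter (fun i => ¬ y i = 1), (if y i = 1 then (1/3:ℝ) else 2/3)
      = (2/3:ℝ) ^ (univ.filter fun i => ¬ y i = 1).card := by
    rw [Finset.prod_congr rfl (fun i hi => by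
      rw [if_neg (Finset.mem_filter.1 hi).2]), Finset.prod_const]
  rw [h1, h2]
  congr 2
  have := Finset.card_filter_add_card_filter_not (s := (univ : Finset (Fin n)))
    (p := fun i => y i = 1)
  simp only [Finset.card_univ, Fintype.card_fin] at this
  omega

lemma sum_pi_prod {n : ℕ} (g : Fin n → ZMod 2 → ℝ) :
    ∑ y : Fin n → ZMod 2, ∏ i, g i (y i) = ∏ i, ∑ v, g i v :=
  (Fintype.prod_sum g).symm

lemma sum_ber13 {n : ℕ} : ∑ y : Fin n → ZMod 2, ber13 y = 1 := by
  rw [Finset.sum_congr rfl (fun y _ => ber13_eq_prod y), sum_pi_prod]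
  have : ∀ i : Fin n, ∑ v, bweight v = 1 := by
    intro i; rw [zmod_sum]; simp [bweight]; norm_num
  rw [Finset.prod_congr rfl (fun i _ => this i), Finset.prod_const_one]

lemma ber13_nonneg {n : ℕ} (y : Fin n → ZMod 2) : 0 ≤ ber13 y := by
  unfold ber13; positivity

lemma ber_pair_aux {n : ℕ} (i j : Fin n) :
    ∑ y : Fin n → ZMod 2, (∏ k, bweight (y k)) * (hfun (y i) * hfun (y j))
      = if i = j then (2/9:ℝ) else 0 := by
  set G : Fin n → ZMod 2 → ℝ :=
    fun k v => bweight v * (if k = i then hfun v else 1) * (if k = j then hfun v else 1) with hG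
  have key : ∀ y : Fin n → ZMod 2,
      (∏ k, bweight (y k)) * (hfun (y i) * hfun (y j)) = ∏ k, G k (y k) := by
    intro y
    have e1 : ∏ k, (if k = i then hfun (y k) else 1) = hfun (y i) := by
      rw [Finset.prod_ite_eq' univ i (fun k => hfun (y k))]; simp
    have e2 : ∏ k, (if k = j then hfun (y k) else 1) = hfun (y j) := by
      rw [Finset.prod_ite_eq' univ j (fun k => hfun (y k))]; simp
    simp only [hG]
    rw [Finset.prod_mul_distrib, Finset.prod_mul_distrib, e1, e2]
    ring
  rw [Finset.sum_congr rfl (fun y _ => key y), sum_pi_prod]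
  by_cases hij : i = j
  · subst hij
    have hfac : ∀ k, ∑ v, G k v = if k = i then (2/9:ℝ) else 1 := by
      intro k
      by_cases hk : k = i <;>
        simp [hG, hk, zmod_sum, bweight, hfun] <;> norm_num
    rw [Finset.prod_congr rfl (fun k _ => hfac k),
      Finset.prod_ite_eq' univ i (fun _ => (2/9:ℝ))]
    simp
  · have hzero : ∑ v, G i v = 0 := by
      simp [hG, hij, zmod_sum, bweight, hfun]; norm_num
    rw [if_neg hij]
    exact Finset.prod_eq_zero (Finset.mem_univ i) hzero

lemma covalg (S N pi pj : ℝ) (hN : N ≠ 0) :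
    (S - pi * (N * pj) - pj * (N * pi) + N * (pi * pj)) / N = S / N - pi * pj := by
  field_simp
  ring

lemma prOne_eq {m : ℕ} (g : (Fin m → ZMod 2) → ZMod 2) :
    prOne g = (∑ x, (if g x = 1 then (1:ℝ) else 0)) / (Fintype.card (Fin m → ZMod 2) : ℝ) := by
  unfold prOne distOf
  congr 1
  rw [Finset.card_filter]
  push_cast
  rfl

set_option maxHeartbeats 1000000 in
/-- Chebyshev lemma. -/
theorem chebyshev_lemma :
    ∃ C > (0:ℝ), ∀ n r m : ℕ, 0 < n → 0 < r → 0 < m →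
      ∀ δ η : ℝ, 0 < δ → 0 < η →
      ∀ P : Fin n → (Fin m → ZMod 2) → ZMod 2,
      ∀ Q : Fin n → Fin r → (Fin m → ZMod 2) → ZMod 2,
      ∀ Γ : Fin n → (Fin r → ZMod 2) → ZMod 2,
        (∀ i x, P i x = Γ i (fun j => Q i j x)) →
        (∀ i, |prOne (P i) - 1/3| ≥ δ) →
        (∀ i j, i ≠ j →
          tvDist (distOf (fun x => ((fun a => Q i a x), (fun a => Q j a x))))
            (fun _ : (Fin r → ZMod 2) × (Fin r → ZMod 2) =>
              1 / (Fintype.card ((Fin r → ZMod 2) × (Fin r → ZMod 2)) : ℝ)) ≤ η) →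
        tvDist (outDist P) ber13 ≥ 1 - C * η / δ^2 - C / (δ^2 * (n:ℝ)) := by
  classical
  refine ⟨24, by norm_num, ?_⟩
  intro n r m hn hr hm δ η hδ hη P Q Γ hPQ hdelta hpair
  have hn' : (0:ℝ) < (n:ℝ) := by exact_mod_cast hn
  have hN0 : (0:ℝ) < (Fintype.card (Fin m → ZMod 2) : ℝ) := by exact_mod_cast Fintype.card_pos
  set N : ℝ := (Fintype.card (Fin m → ZMod 2) : ℝ) with hNdef
  set find : ZMod 2 → ℝ := fun v => if v = 1 then (1:ℝ) else 0 with hfind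
  have hfind01 : ∀ v, 0 ≤ find v ∧ find v ≤ 1 := by
    intro v; by_cases h : v = 1 <;> simp [hfind, h]
  set p : Fin n → ℝ := fun i => prOne (P i) with hp
  set ε : Fin n → ℝ := fun i => if 1/3 ≤ p i then 1 else -1 with hε
  have hε1 : ∀ i, ε i = 1 ∨ ε i = -1 := by
    intro i
    by_cases h : 1/3 ≤ p i
    · left; simp only [hε]; rw [if_pos h]
    · right; simp only [hε]; rw [if_neg h]
  have hεsq : ∀ i, ε i * ε i = 1 := by
    intro i; rcases hε1 i with h | h <;> rw [h] <;> norm_num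
  have hεabs : ∀ i, |ε i| = 1 := by
    intro i; rcases hε1 i with h | h <;> rw [h] <;> norm_num
  have hεδ : ∀ i, δ ≤ ε i * (p i - 1/3) := by
    intro i
    have hd := hdelta i
    by_cases h : 1/3 ≤ p i
    · simp only [hε, if_pos h, one_mul]
      rw [ge_iff_le, abs_of_nonneg (by linarith)] at hd; exact hd
    · simp only [hε, if_neg h]
      push_neg at h
      rw [ge_iff_le, abs_of_neg (by linarith)] at hd; linarith
  set Z : (Fin n → ZMod 2) → ℝ := fun y => ∑ i, ε i * hfun (y i) with hZ
  set E : ℝ := ∑ i, ε i * (p i - 1/3) with hE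
  have hEge : (n:ℝ) * δ ≤ E := by
    calc (n:ℝ) * δ = ∑ _i : Fin n, δ := by
          rw [Finset.sum_const, Finset.card_univ, Fintype.card_fin, nsmul_eq_mul]
    _ ≤ E := Finset.sum_le_sum fun i _ => hεδ i
  set w : Fin n → ZMod 2 → ℝ := fun i v => find v - p i with hw
  have hZE : ∀ y, Z y - E = ∑ i, ε i * w i (y i) := by
    intro y
    rw [hZ, hE, ← Finset.sum_sub_distrib]
    refine Finset.sum_congr rfl fun i _ => ?_
    simp only [hw, hfun, hfind]
    ring
  -- ## second moment under ber13
  have hνZ2 : ∑ y, ber13 y * Z y ^ 2 = (n:ℝ) * (2/9) := by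
    have e1 : ∀ y : Fin n → ZMod 2, ber13 y * Z y ^ 2
        = ∑ i, ∑ j, (ε i * ε j) * ((∏ k, bweight (y k)) * (hfun (y i) * hfun (y j))) := by
      intro y
      rw [ber13_eq_prod, hZ, sq, Finset.sum_mul_sum, Finset.mul_sum]
      refine Finset.sum_congr rfl fun i _ => ?_
      rw [Finset.mul_sum]
      refine Finset.sum_congr rfl fun j _ => ?_
      ring
    rw [Finset.sum_congr rfl fun y _ => e1 y]
    rw [Finset.sum_comm]
    have e2 : ∀ i : Fin n, ∑ y : Fin n → ZMod 2,
        ∑ j, (ε i * ε j) * ((∏ k, bweight (y k)) * (hfun (y i) * hfun (y j)))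
        = ε i * ε i * (2/9) := by
      intro i
      rw [Finset.sum_comm]
      have e3 : ∀ j : Fin n, ∑ y : Fin n → ZMod 2,
          (ε i * ε j) * ((∏ k, bweight (y k)) * (hfun (y i) * hfun (y j)))
          = (ε i * ε j) * (if i = j then (2/9:ℝ) else 0) := by
        intro j
        rw [← Finset.mul_sum, ber_pair_aux]
      rw [Finset.sum_congr rfl fun j _ => e3 j]
      simp only [mul_ite, mul_zero]
      rw [Finset.sum_ite_eq univ i (fun j => ε i * ε j * (2/9))]
      simp
    rw [Finset.sum_congr rfl fun i _ => e2 i]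
    rw [Finset.sum_congr rfl fun i _ => by rw [hεsq i]]
    rw [Finset.sum_const, Finset.card_univ, Fintype.card_fin, nsmul_eq_mul]
    ring
  -- ## pushforward for outDist
  have hpush : ∀ F : (Fin n → ZMod 2) → ℝ,
      ∑ y, outDist P y * F y = (∑ x : (Fin m → ZMod 2), F (fun i => P i x)) / N :=
    fun F => sum_distOf_mul (fun x i => P i x) F
  have hμ1 : ∑ y, outDist P y = 1 := sum_distOf _
  have hμpos : ∀ y, 0 ≤ outDist P y := fun y => distOf_nonneg _ y
  have hpN : ∀ i, (∑ x : (Fin m → ZMod 2), find (P i x)) = N * p i := by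
    intro i
    have h := prOne_eq (P i)
    have : p i = (∑ x : (Fin m → ZMod 2), find (P i x)) / N := h
    rw [this]
    field_simp
  have hp0 : ∀ i, 0 ≤ p i := fun i => distOf_nonneg _ _
  have hp1 : ∀ i, p i ≤ 1 := by
    intro i
    have hle : (∑ x : (Fin m → ZMod 2), find (P i x)) ≤ N := by
      calc (∑ x : (Fin m → ZMod 2), find (P i x)) ≤ ∑ _x : (Fin m → ZMod 2), (1:ℝ) :=
            Finset.sum_le_sum fun x _ => (hfind01 _).2
      _ = N := by rw [Finset.sum_const, Finset.card_univ, nsmul_eq_mul, mul_one]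
    have := hpN i
    nlinarith
  -- ## covariance
  set Cov : Fin n → Fin n → ℝ :=
    fun i j => (∑ x : (Fin m → ZMod 2), w i (P i x) * w j (P j x)) / N with hCov
  have hVar : ∑ y, outDist P y * (Z y - E) ^ 2 = ∑ i, ∑ j, (ε i * ε j) * Cov i j := by
    rw [hpush (fun y => (Z y - E) ^ 2)]
    have e1 : ∀ x : (Fin m → ZMod 2), (Z (fun i => P i x) - E) ^ 2
        = ∑ i, ∑ j, (ε i * ε j) * (w i (P i x) * w j (P j x)) := by
      intro x
      rw [hZE, sq, Finset.sum_mul_sum]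
      refine Finset.sum_congr rfl fun i _ => ?_
      refine Finset.sum_congr rfl fun j _ => ?_
      ring
    rw [Finset.sum_congr rfl fun x (_ : x ∈ univ) => e1 x]
    rw [Finset.sum_comm, Finset.sum_div]
    refine Finset.sum_congr rfl fun i _ => ?_
    rw [Finset.sum_comm, Finset.sum_div]
    refine Finset.sum_congr rfl fun j _ => ?_
    rw [← Finset.mul_sum, hCov, mul_div_assoc]
  have hwabs : ∀ i v, |w i v| ≤ 1 := by
    intro i v
    have h1 := (hfind01 v).1
    have h2 := (hfind01 v).2
    have := hp0 i; have := hp1 i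
    rw [abs_le]; constructor <;> simp only [hw] <;> linarith
  have hCd : ∀ i, |Cov i i| ≤ 1 := by
    intro i
    rw [hCov]
    rw [abs_div, abs_of_pos hN0, div_le_one hN0]
    calc |∑ x : (Fin m → ZMod 2), w i (P i x) * w i (P i x)|
        ≤ ∑ x : (Fin m → ZMod 2), |w i (P i x) * w i (P i x)| := Finset.abs_sum_le_sum_abs _ _
    _ ≤ ∑ _x : (Fin m → ZMod 2), (1:ℝ) := by
          refine Finset.sum_le_sum fun x _ => ?_
          rw [abs_mul]
          have := hwabs i (P i x)
          nlinarith [abs_nonneg (w i (P i x))]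
    _ = N := by rw [Finset.sum_const, Finset.card_univ, nsmul_eq_mul, mul_one]
  -- ## off-diagonal covariance via near-uniformity
  have hM0 : (0:ℝ) < (Fintype.card (Fin r → ZMod 2) : ℝ) := by exact_mod_cast Fintype.card_pos
  set M : ℝ := (Fintype.card (Fin r → ZMod 2) : ℝ) with hM
  set g : Fin n → (Fin r → ZMod 2) → ℝ := fun i u => if Γ i u = 1 then 1 else 0 with hg
  have hg01 : ∀ i u, 0 ≤ g i u ∧ g i u ≤ 1 := by
    intro i u; by_cases h : Γ i u = 1 <;> simp [hg, h]
  have hfg : ∀ i x, find (P i x) = g i (fun a => Q i a x) := by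
    intro i x
    simp only [hfind, hg, hPQ i x]
  set a : Fin n → ℝ := fun i => (∑ u, g i u) / M with ha
  have ha0 : ∀ i, 0 ≤ a i := by
    intro i
    apply div_nonneg _ hM0.le
    exact Finset.sum_nonneg fun u _ => (hg01 i u).1
  have ha1 : ∀ i, a i ≤ 1 := by
    intro i
    rw [ha, div_le_one hM0]
    calc ∑ u, g i u ≤ ∑ _u : (Fin r → ZMod 2), (1:ℝ) := Finset.sum_le_sum fun u _ => (hg01 i u).2
    _ = M := by rw [Finset.sum_const, Finset.card_univ, nsmul_eq_mul, mul_one]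
  have hCod : ∀ i j, i ≠ j → |Cov i j| ≤ 6 * η := by
    intro i j hij
    set D := distOf (fun x : (Fin m → ZMod 2) => ((fun a => Q i a x), (fun a => Q j a x))) with hD
    set U : (Fin r → ZMod 2) × (Fin r → ZMod 2) → ℝ := fun _ => 1 / (Fintype.card ((Fin r → ZMod 2) × (Fin r → ZMod 2)) : ℝ) with hU
    have hTV : (1/2) * ∑ z, |D z - U z| ≤ η := hpair i j hij
    have key : ∀ F : (Fin r → ZMod 2) × (Fin r → ZMod 2) → ℝ, (∀ z, |F z| ≤ 1) →
        |(∑ z, D z * F z) - ∑ z, U z * F z| ≤ 2 * η := by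
      intro F hF
      have e : (∑ z, D z * F z) - ∑ z, U z * F z = ∑ z, (D z - U z) * F z := by
        rw [← Finset.sum_sub_distrib]
        exact Finset.sum_congr rfl fun z _ => by ring
      rw [e]
      calc |∑ z, (D z - U z) * F z| ≤ ∑ z, |(D z - U z) * F z| :=
            Finset.abs_sum_le_sum_abs _ _
      _ ≤ ∑ z, |D z - U z| := by
            refine Finset.sum_le_sum fun z _ => ?_
            rw [abs_mul]
            exact mul_le_of_le_one_right (abs_nonneg _) (hF z)
      _ ≤ 2 * η := by linarith
    have hcardRR : (Fintype.card ((Fin r → ZMod 2) × (Fin r → ZMod 2)) : ℝ) = M * M := by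
      rw [hM, Fintype.card_prod]; push_cast; ring
    have hUF : ∀ F : (Fin r → ZMod 2) × (Fin r → ZMod 2) → ℝ,
        ∑ z, U z * F z = (∑ z, F z) / (M * M) := by
      intro F
      rw [← hcardRR]
      calc ∑ z, U z * F z = ∑ z, F z / (Fintype.card ((Fin r → ZMod 2) × (Fin r → ZMod 2)) : ℝ) := by
            refine Finset.sum_congr rfl fun z _ => ?_
            rw [hU]; ring
      _ = (∑ z, F z) / (Fintype.card ((Fin r → ZMod 2) × (Fin r → ZMod 2)) : ℝ) := by
            rw [Finset.sum_div]
    have hgabs : ∀ (k : Fin n) (u : Fin r → ZMod 2), |g k u| ≤ 1 := by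
      intro k u
      rw [abs_of_nonneg (hg01 k u).1]; exact (hg01 k u).2
    have hD1 : ∑ z, D z * (g i z.1 * g j z.2)
        = (∑ x : (Fin m → ZMod 2), g i (fun a => Q i a x) * g j (fun a => Q j a x)) / N :=
      sum_distOf_mul _ _
    have hgsum : ∑ z : (Fin r → ZMod 2) × (Fin r → ZMod 2), g i z.1 * g j z.2
        = (∑ u, g i u) * (∑ v, g j v) := by
      rw [Fintype.sum_prod_type, Finset.sum_mul_sum]
    have hU1 : ∑ z, U z * (g i z.1 * g j z.2) = a i * a j := by
      rw [hUF, hgsum]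
      simp only [ha]
      rw [div_mul_div_comm]
    have hU2 : ∑ z, U z * g i z.1 = a i := by
      rw [hUF]
      have e : ∑ z : (Fin r → ZMod 2) × (Fin r → ZMod 2), g i z.1 = (∑ u, g i u) * M := by
        rw [Fintype.sum_prod_type]
        have e2 : ∀ u : Fin r → ZMod 2,
            ∑ _v : Fin r → ZMod 2, g i u = g i u * M := by
          intro u
          rw [Finset.sum_const, Finset.card_univ, nsmul_eq_mul, mul_comm]
        calc ∑ u : Fin r → ZMod 2, ∑ v : Fin r → ZMod 2, g i (u, v).1
            = ∑ u : Fin r → ZMod 2, g i u * M := Finset.sum_congr rfl fun u _ => e2 u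
        _ = (∑ u, g i u) * M := by rw [← Finset.sum_mul]
      rw [e]
      simp only [ha]
      field_simp
    have hU3 : ∑ z, U z * g j z.2 = a j := by
      rw [hUF]
      have e : ∑ z : (Fin r → ZMod 2) × (Fin r → ZMod 2), g j z.2 = (∑ u, g j u) * M := by
        rw [Fintype.sum_prod_type]
        calc ∑ u : Fin r → ZMod 2, ∑ v : Fin r → ZMod 2, g j (u, v).2
            = ∑ _u : Fin r → ZMod 2, ∑ v : Fin r → ZMod 2, g j v := rfl
        _ = (∑ u, g j u) * M := by
            rw [Finset.sum_const, Finset.card_univ, nsmul_eq_mul, mul_comm]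
      rw [e]
      simp only [ha]
      field_simp
    have hD2 : ∑ z, D z * g i z.1 = p i := by
      rw [hD, sum_distOf_mul]
      rw [Finset.sum_congr rfl fun x (_ : x ∈ univ) => (hfg i x).symm]
      rw [hpN i, mul_comm, mul_div_assoc, div_self (ne_of_gt hN0), mul_one]
    have hD3 : ∑ z, D z * g j z.2 = p j := by
      rw [hD, sum_distOf_mul]
      rw [Finset.sum_congr rfl fun x (_ : x ∈ univ) => (hfg j x).symm]
      rw [hpN j, mul_comm, mul_div_assoc, div_self (ne_of_gt hN0), mul_one]
    have k1 := key (fun z => g i z.1 * g j z.2) (fun z => by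
      rw [abs_mul]
      exact mul_le_one₀ (hgabs i z.1) (abs_nonneg _) (hgabs j z.2))
    have k2 := key (fun z => g i z.1) (fun z => hgabs i z.1)
    have k3 := key (fun z => g j z.2) (fun z => hgabs j z.2)
    rw [hU1] at k1
    rw [hD2, hU2] at k2
    rw [hD3, hU3] at k3
    have hCovE : Cov i j = (∑ z, D z * (g i z.1 * g j z.2)) - p i * p j := by
      simp only [hCov]
      rw [hD1]
      have expand : ∀ x : (Fin m → ZMod 2), w i (P i x) * w j (P j x)
          = g i (fun a => Q i a x) * g j (fun a => Q j a x)
            - p i * find (P j x) - p j * find (P i x) + p i * p j := by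
        intro x
        rw [← hfg, ← hfg]
        simp only [hw]
        ring
      rw [Finset.sum_congr rfl fun x (_ : x ∈ univ) => expand x]
      rw [Finset.sum_add_distrib, Finset.sum_sub_distrib, Finset.sum_sub_distrib,
        ← Finset.mul_sum, ← Finset.mul_sum, hpN i, hpN j, Finset.sum_const,
        Finset.card_univ, nsmul_eq_mul]
      have hNne : N ≠ 0 := ne_of_gt hN0
      rw [← hNdef]
      exact covalg _ _ _ _ hNne
    have hsplit : Cov i j = ((∑ z, D z * (g i z.1 * g j z.2)) - a i * a j)
        + a i * (a j - p j) + (a i - p i) * p j := by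
      rw [hCovE]; ring
    rw [hsplit]
    have t1 : |(∑ z, D z * (g i z.1 * g j z.2)) - a i * a j| ≤ 2 * η := k1
    have t2 : |a i * (a j - p j)| ≤ 2 * η := by
      rw [abs_mul]
      calc |a i| * |a j - p j| ≤ 1 * (2 * η) := by
            refine mul_le_mul ?_ ?_ (abs_nonneg _) (by norm_num)
            · rw [abs_of_nonneg (ha0 i)]; exact ha1 i
            · rw [abs_sub_comm]; exact k3
      _ = 2 * η := by ring
    have t3 : |(a i - p i) * p j| ≤ 2 * η := by
      rw [abs_mul]
      calc |a i - p i| * |p j| ≤ (2 * η) * 1 := by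
            refine mul_le_mul ?_ ?_ (abs_nonneg _) (by linarith)
            · rw [abs_sub_comm]; exact k2
            · rw [abs_of_nonneg (hp0 j)]; exact hp1 j
      _ = 2 * η := by ring
    calc |(∑ z, D z * (g i z.1 * g j z.2)) - a i * a j
        + a i * (a j - p j) + (a i - p i) * p j|
        ≤ |(∑ z, D z * (g i z.1 * g j z.2)) - a i * a j + a i * (a j - p j)|
          + |(a i - p i) * p j| := abs_add_le _ _
    _ ≤ |(∑ z, D z * (g i z.1 * g j z.2)) - a i * a j| + |a i * (a j - p j)|
          + |(a i - p i) * p j| := by linarith [abs_add_le ((∑ z, D z * (g i z.1 * g j z.2)) - a i * a j) (a i * (a j - p j))]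
    _ ≤ 6 * η := by linarith
  -- ## variance bound
  have hVarB : ∑ i, ∑ j, (ε i * ε j) * Cov i j ≤ (n:ℝ) + 6 * (n:ℝ)^2 * η := by
    calc ∑ i, ∑ j, (ε i * ε j) * Cov i j
        ≤ ∑ i, ∑ j, (@ite ℝ (i = j) (instDecidableEqFin n i j) 1 0 + 6 * η) := by
          refine Finset.sum_le_sum fun i _ => Finset.sum_le_sum fun j _ => ?_
          have hb : (ε i * ε j) * Cov i j ≤ |Cov i j| := by
            calc (ε i * ε j) * Cov i j ≤ |(ε i * ε j) * Cov i j| := le_abs_self _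
            _ = |Cov i j| := by rw [abs_mul, abs_mul, hεabs i, hεabs j, one_mul, one_mul]
          by_cases hij : i = j
          · subst hij
            rw [if_pos rfl]
            have h9 := hCd i
            linarith [hη]
          · rw [if_neg hij]
            have := hCod i j hij
            linarith
    _ = ∑ _i : Fin n, ((1:ℝ) + (n:ℝ) * (6 * η)) := by
          refine Finset.sum_congr rfl fun i _ => ?_
          rw [Finset.sum_add_distrib, Finset.sum_const, Finset.card_univ,
            Fintype.card_fin, nsmul_eq_mul, Fintype.sum_ite_eq i (fun _ => (1:ℝ))]
    _ = (n:ℝ) + 6 * (n:ℝ)^2 * η := by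
          rw [Finset.sum_const, Finset.card_univ, Fintype.card_fin, nsmul_eq_mul]
          ring
  -- ## Chebyshev on both sides
  set t : ℝ := (n:ℝ) * δ / 2 with ht
  have ht0 : 0 < t := by rw [ht]; positivity
  have ht2 : (0:ℝ) < t^2 := by positivity
  set A : Finset (Fin n → ZMod 2) := univ.filter (fun y => t ≤ Z y) with hAdef
  have hνA : t^2 * ∑ y ∈ A, ber13 y ≤ (n:ℝ) * (2/9) := by
    rw [← hνZ2]
    exact cheb ber13 ber13_nonneg Z t ht0.le A fun y hy =>
      le_trans (Finset.mem_filter.1 hy).2 (le_abs_self _)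
  set B : Finset (Fin n → ZMod 2) := univ.filter (fun y => ¬ t ≤ Z y) with hBdef
  have hμB : t^2 * ∑ y ∈ B, outDist P y ≤ (n:ℝ) + 6 * (n:ℝ)^2 * η := by
    refine le_trans (cheb (outDist P) hμpos (fun y => Z y - E) t ht0.le B ?_) ?_
    · intro y hy
      have h1 : ¬ t ≤ Z y := (Finset.mem_filter.1 hy).2
      push_neg at h1
      have h2 : (n:ℝ) * δ = 2 * t := by rw [ht]; ring
      refine le_abs.mpr (Or.inr ?_)
      have h3 := hEge
      rw [h2] at h3
      show t ≤ -(Z y - E)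
      linarith
    · rw [hVar]; exact hVarB
  have hAB : (∑ y ∈ A, outDist P y) + ∑ y ∈ B, outDist P y = 1 := by
    rw [hAdef, hBdef, Finset.sum_filter_add_sum_filter_not]
    exact hμ1
  have hνAle : ∑ y ∈ A, ber13 y ≤ ((n:ℝ) * (2/9)) / t^2 := by
    rw [le_div_iff₀ ht2, mul_comm]
    exact hνA
  have hμBle : ∑ y ∈ B, outDist P y ≤ ((n:ℝ) + 6 * (n:ℝ)^2 * η) / t^2 := by
    rw [le_div_iff₀ ht2, mul_comm]
    exact hμB
  have main := tv_ge (outDist P) ber13 hμ1 sum_ber13 A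
  have harith : ((n:ℝ) + 6 * (n:ℝ)^2 * η + (n:ℝ) * (2/9)) / t^2
      ≤ 24 * η / δ^2 + 24 / (δ^2 * (n:ℝ)) := by
    rw [div_le_iff₀ ht2]
    have e : (24 * η / δ^2 + 24 / (δ^2 * (n:ℝ))) * t^2 = 6 * (n:ℝ)^2 * η + 6 * (n:ℝ) := by
      rw [ht]
      field_simp
      ring
    rw [e]
    linarith [hn']
  have hsum : ((n:ℝ) + 6 * (n:ℝ)^2 * η) / t^2 + ((n:ℝ) * (2/9)) / t^2
      = ((n:ℝ) + 6 * (n:ℝ)^2 * η + (n:ℝ) * (2/9)) / t^2 := by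
    rw [← add_div]
  have goal1 : 1 - 24 * η / δ^2 - 24 / (δ^2 * (n:ℝ))
      ≤ (∑ y ∈ A, outDist P y) - ∑ y ∈ A, ber13 y := by
    have h1 : ∑ y ∈ A, outDist P y = 1 - ∑ y ∈ B, outDist P y := by linarith
    rw [h1]
    linarith
  linarith [main, goal1]
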